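/- For every M > 0 there exist constants K > 0 and h₀ > 0, depending only on M, with the following property. Let a < b with h := (b − a)/4 ≤ h₀, and let x : [a, b] → ℝ² be five times continuously differentiable and unit-speed (‖ẋ(t)‖ = 1 for all t), with ‖x⁽ᵐ⁾(t)‖ ≤ M for all t ∈ [a, b] and all 2 ≤ m ≤ 5. Define w̃₂ := (3/(8h))·(x(b) − x(a)) − (1/4)·(ẋ(a) + ẋ(b)). Then w̃₂ ≠ 0 and ‖ẋ(a + 2h) − w̃₂/‖w̃₂‖‖ ≤ K·h⁴. -/

import Mathlib

set_option maxHeartbeats 2000000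

section Aux

variable {E : Type*} [NormedAddCommGroup E] [NormedSpace ℝ E]

/-- Mean value bound anchored at a point `m` of the interval. -/
lemma mvt_anchor {a b m : ℝ} (hm : m ∈ Set.Icc a b) {f g : ℝ → E} {C : ℝ}
    (hd : ∀ t ∈ Set.Icc a b, HasDerivWithinAt f (g t) (Set.Icc a b) t)
    (hC : ∀ t ∈ Set.Icc a b, ‖g t‖ ≤ C) :
    ∀ t ∈ Set.Icc a b, ‖f t - f m‖ ≤ C * |t - m| := by
  intro t ht
  simpa [Real.norm_eq_abs] using
    Convex.norm_image_sub_le_of_norm_hasDerivWithin_le hd hC (convex_Icc a b) hm ht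

end Aux

/-- Proposition 1 (midpoint part). -/
theorem midpoint_velocity_estimate :
    ∀ M : ℝ, 0 < M → ∃ K : ℝ, 0 < K ∧ ∃ h₀ : ℝ, 0 < h₀ ∧
      ∀ (a b : ℝ) (x x1 x2 x3 x4 x5 : ℝ → EuclideanSpace ℝ (Fin 2)),
        a < b → (b - a) / 4 ≤ h₀ →
        (∀ t ∈ Set.Icc a b, HasDerivWithinAt x (x1 t) (Set.Icc a b) t) →
        (∀ t ∈ Set.Icc a b, HasDerivWithinAt x1 (x2 t) (Set.Icc a b) t) →
        (∀ t ∈ Set.Icc a b, HasDerivWithinAt x2 (x3 t) (Set.Icc a b) t) →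
        (∀ t ∈ Set.Icc a b, HasDerivWithinAt x3 (x4 t) (Set.Icc a b) t) →
        (∀ t ∈ Set.Icc a b, HasDerivWithinAt x4 (x5 t) (Set.Icc a b) t) →
        ContinuousOn x5 (Set.Icc a b) →
        (∀ t ∈ Set.Icc a b, ‖x1 t‖ = 1) →
        (∀ t ∈ Set.Icc a b,
          ‖x2 t‖ ≤ M ∧ ‖x3 t‖ ≤ M ∧ ‖x4 t‖ ≤ M ∧ ‖x5 t‖ ≤ M) →
        ∀ h : ℝ, h = (b - a) / 4 →
        ∀ w₂ : EuclideanSpace ℝ (Fin 2),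
          w₂ = (3 / (8 * h)) • (x b - x a) - (1 / 4 : ℝ) • (x1 a + x1 b) →
          w₂ ≠ 0 ∧ ‖x1 (a + 2 * h) - ‖w₂‖⁻¹ • w₂‖ ≤ K * h ^ 4 := by
  intro M hM
  refine ⟨64 * M, by positivity, min 1 (1 / (64 * M)), by positivity, ?_⟩
  intro a b x x1 x2 x3 x4 x5 hab hh₀ hd0 hd1 hd2 hd3 hd4 _hc5 hunit hbnd h hh w₂ hw
  have hb4 : b = a + 4 * h := by rw [hh]; ring
  subst hb4
  have hhpos : 0 < h := by nlinarith
  set m : ℝ := a + 2 * h with hmdef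
  have hmS : m ∈ Set.Icc a (a + 4 * h) := by
    rw [Set.mem_Icc]; constructor <;> [skip; skip] <;> rw [hmdef] <;> linarith
  have haS : a ∈ Set.Icc a (a + 4 * h) := by
    rw [Set.mem_Icc]; constructor <;> linarith
  have hbS : a + 4 * h ∈ Set.Icc a (a + 4 * h) := by
    rw [Set.mem_Icc]; constructor <;> linarith
  have habs : ∀ t ∈ Set.Icc a (a + 4 * h), |t - m| ≤ 2 * h := by
    intro t ht
    rw [Set.mem_Icc] at ht
    rw [abs_le, hmdef]
    constructor <;> linarith [ht.1, ht.2]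
  -- polynomial derivatives
  have hp1 : ∀ t : ℝ, HasDerivAt (fun u => u - m) 1 t :=
    fun t => (hasDerivAt_id t).sub_const m
  have hp2 : ∀ t : ℝ, HasDerivAt (fun u => (u - m) ^ 2 / 2) (t - m) t := by
    intro t
    have h2 := ((hp1 t).pow 2).div_const 2
    have e : ((2 : ℕ) : ℝ) * (t - m) ^ (2 - 1) * 1 / 2 = t - m := by norm_num
    rw [e] at h2; exact h2
  have hp3 : ∀ t : ℝ, HasDerivAt (fun u => (u - m) ^ 3 / 6) ((t - m) ^ 2 / 2) t := by
    intro t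
    have h2 := ((hp1 t).pow 3).div_const 6
    have e : ((3 : ℕ) : ℝ) * (t - m) ^ (3 - 1) * 1 / 6 = (t - m) ^ 2 / 2 := by norm_num; ring
    rw [e] at h2; exact h2
  have hp4 : ∀ t : ℝ, HasDerivAt (fun u => (u - m) ^ 4 / 24) ((t - m) ^ 3 / 6) t := by
    intro t
    have h2 := ((hp1 t).pow 4).div_const 24
    have e : ((4 : ℕ) : ℝ) * (t - m) ^ (4 - 1) * 1 / 24 = (t - m) ^ 3 / 6 := by norm_num; ring
    rw [e] at h2; exact h2
  -- stage 4
  have B4 : ∀ t ∈ Set.Icc a (a + 4 * h), ‖x4 t - x4 m‖ ≤ M * |t - m| := by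
    have hd4' : ∀ t ∈ Set.Icc a (a + 4 * h),
        HasDerivWithinAt (fun u => x4 u - x4 m) (x5 t) (Set.Icc a (a + 4 * h)) t := by
      intro t ht; simpa using (hd4 t ht).sub_const (x4 m)
    have := mvt_anchor hmS hd4' (fun t ht => (hbnd t ht).2.2.2)
    intro t ht
    simpa using this t ht
  -- stage 3
  have B3 : ∀ t ∈ Set.Icc a (a + 4 * h),
      ‖x3 t - x3 m - (t - m) • x4 m‖ ≤ (M * (2 * h)) * |t - m| := by
    have hd3' : ∀ t ∈ Set.Icc a (a + 4 * h),
        HasDerivWithinAt (fun u => x3 u - (u - m) • x4 m) (x4 t - x4 m)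
          (Set.Icc a (a + 4 * h)) t := by
      intro t ht
      have := (hd3 t ht).sub (((hp1 t).smul_const (x4 m)).hasDerivWithinAt)
      simp only [one_smul] at this; exact this
    have hC : ∀ t ∈ Set.Icc a (a + 4 * h), ‖x4 t - x4 m‖ ≤ M * (2 * h) := by
      intro t ht
      exact (B4 t ht).trans (mul_le_mul_of_nonneg_left (habs t ht) hM.le)
    have := mvt_anchor hmS hd3' hC
    intro t ht
    have h2 := this t ht
    have e : (fun u => x3 u - (u - m) • x4 m) t - (fun u => x3 u - (u - m) • x4 m) m
        = x3 t - x3 m - (t - m) • x4 m := by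
      simp only [sub_self, zero_smul, sub_zero]; abel
    rwa [e] at h2
  -- stage 2
  have B2 : ∀ t ∈ Set.Icc a (a + 4 * h),
      ‖x2 t - x2 m - (t - m) • x3 m - ((t - m) ^ 2 / 2) • x4 m‖
        ≤ (M * (2 * h) * (2 * h)) * |t - m| := by
    have hd2' : ∀ t ∈ Set.Icc a (a + 4 * h),
        HasDerivWithinAt (fun u => x2 u - (u - m) • x3 m - ((u - m) ^ 2 / 2) • x4 m)
          (x3 t - x3 m - (t - m) • x4 m) (Set.Icc a (a + 4 * h)) t := by
      intro t ht
      have := ((hd2 t ht).sub (((hp1 t).smul_const (x3 m)).hasDerivWithinAt)).sub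
        (((hp2 t).smul_const (x4 m)).hasDerivWithinAt)
      simp only [one_smul] at this; exact this
    have hC : ∀ t ∈ Set.Icc a (a + 4 * h),
        ‖x3 t - x3 m - (t - m) • x4 m‖ ≤ M * (2 * h) * (2 * h) := by
      intro t ht
      exact (B3 t ht).trans (mul_le_mul_of_nonneg_left (habs t ht) (by positivity))
    have := mvt_anchor hmS hd2' hC
    intro t ht
    have h2 := this t ht
    have e : (fun u => x2 u - (u - m) • x3 m - ((u - m) ^ 2 / 2) • x4 m) t
          - (fun u => x2 u - (u - m) • x3 m - ((u - m) ^ 2 / 2) • x4 m) m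
        = x2 t - x2 m - (t - m) • x3 m - ((t - m) ^ 2 / 2) • x4 m := by
      simp only [sub_self, zero_smul, sub_zero, ne_eq, OfNat.ofNat_ne_zero,
        not_false_eq_true, zero_pow, zero_div]
      abel
    rwa [e] at h2
  -- stage 1
  have B1 : ∀ t ∈ Set.Icc a (a + 4 * h),
      ‖x1 t - x1 m - (t - m) • x2 m - ((t - m) ^ 2 / 2) • x3 m - ((t - m) ^ 3 / 6) • x4 m‖
        ≤ (M * (2 * h) * (2 * h) * (2 * h)) * |t - m| := by
    have hd1' : ∀ t ∈ Set.Icc a (a + 4 * h),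
        HasDerivWithinAt
          (fun u => x1 u - (u - m) • x2 m - ((u - m) ^ 2 / 2) • x3 m - ((u - m) ^ 3 / 6) • x4 m)
          (x2 t - x2 m - (t - m) • x3 m - ((t - m) ^ 2 / 2) • x4 m)
          (Set.Icc a (a + 4 * h)) t := by
      intro t ht
      have := (((hd1 t ht).sub (((hp1 t).smul_const (x2 m)).hasDerivWithinAt)).sub
        (((hp2 t).smul_const (x3 m)).hasDerivWithinAt)).sub
        (((hp3 t).smul_const (x4 m)).hasDerivWithinAt)
      simp only [one_smul] at this; exact this
    have hC : ∀ t ∈ Set.Icc a (a + 4 * h),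
        ‖x2 t - x2 m - (t - m) • x3 m - ((t - m) ^ 2 / 2) • x4 m‖
          ≤ M * (2 * h) * (2 * h) * (2 * h) := by
      intro t ht
      exact (B2 t ht).trans (mul_le_mul_of_nonneg_left (habs t ht) (by positivity))
    have := mvt_anchor hmS hd1' hC
    intro t ht
    have h2 := this t ht
    have e : (fun u => x1 u - (u - m) • x2 m - ((u - m) ^ 2 / 2) • x3 m
            - ((u - m) ^ 3 / 6) • x4 m) t
          - (fun u => x1 u - (u - m) • x2 m - ((u - m) ^ 2 / 2) • x3 m
            - ((u - m) ^ 3 / 6) • x4 m) m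
        = x1 t - x1 m - (t - m) • x2 m - ((t - m) ^ 2 / 2) • x3 m - ((t - m) ^ 3 / 6) • x4 m := by
      simp only [sub_self, zero_smul, sub_zero, ne_eq, OfNat.ofNat_ne_zero,
        not_false_eq_true, zero_pow, zero_div]
      abel
    rwa [e] at h2
  -- stage 0
  have B0 : ∀ t ∈ Set.Icc a (a + 4 * h),
      ‖x t - x m - (t - m) • x1 m - ((t - m) ^ 2 / 2) • x2 m - ((t - m) ^ 3 / 6) • x3 m
          - ((t - m) ^ 4 / 24) • x4 m‖
        ≤ (M * (2 * h) * (2 * h) * (2 * h) * (2 * h)) * |t - m| := by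
    have hd0' : ∀ t ∈ Set.Icc a (a + 4 * h),
        HasDerivWithinAt
          (fun u => x u - (u - m) • x1 m - ((u - m) ^ 2 / 2) • x2 m - ((u - m) ^ 3 / 6) • x3 m
            - ((u - m) ^ 4 / 24) • x4 m)
          (x1 t - x1 m - (t - m) • x2 m - ((t - m) ^ 2 / 2) • x3 m - ((t - m) ^ 3 / 6) • x4 m)
          (Set.Icc a (a + 4 * h)) t := by
      intro t ht
      have := ((((hd0 t ht).sub (((hp1 t).smul_const (x1 m)).hasDerivWithinAt)).sub
        (((hp2 t).smul_const (x2 m)).hasDerivWithinAt)).sub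
        (((hp3 t).smul_const (x3 m)).hasDerivWithinAt)).sub
        (((hp4 t).smul_const (x4 m)).hasDerivWithinAt)
      simp only [one_smul] at this; exact this
    have hC : ∀ t ∈ Set.Icc a (a + 4 * h),
        ‖x1 t - x1 m - (t - m) • x2 m - ((t - m) ^ 2 / 2) • x3 m - ((t - m) ^ 3 / 6) • x4 m‖
          ≤ M * (2 * h) * (2 * h) * (2 * h) * (2 * h) := by
      intro t ht
      exact (B1 t ht).trans (mul_le_mul_of_nonneg_left (habs t ht) (by positivity))
    have := mvt_anchor hmS hd0' hC
    intro t ht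
    have h2 := this t ht
    have e : (fun u => x u - (u - m) • x1 m - ((u - m) ^ 2 / 2) • x2 m
            - ((u - m) ^ 3 / 6) • x3 m - ((u - m) ^ 4 / 24) • x4 m) t
          - (fun u => x u - (u - m) • x1 m - ((u - m) ^ 2 / 2) • x2 m
            - ((u - m) ^ 3 / 6) • x3 m - ((u - m) ^ 4 / 24) • x4 m) m
        = x t - x m - (t - m) • x1 m - ((t - m) ^ 2 / 2) • x2 m - ((t - m) ^ 3 / 6) • x3 m
            - ((t - m) ^ 4 / 24) • x4 m := by
      simp only [sub_self, zero_smul, sub_zero, ne_eq, OfNat.ofNat_ne_zero,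
        not_false_eq_true, zero_pow, zero_div]
      abel
    rwa [e] at h2
  -- abbreviations for the four remainder vectors
  set V0a := x a - x m - (a - m) • x1 m - ((a - m) ^ 2 / 2) • x2 m - ((a - m) ^ 3 / 6) • x3 m
      - ((a - m) ^ 4 / 24) • x4 m with hV0a
  set V0b := x (a + 4 * h) - x m - ((a + 4 * h) - m) • x1 m
      - (((a + 4 * h) - m) ^ 2 / 2) • x2 m - (((a + 4 * h) - m) ^ 3 / 6) • x3 m
      - (((a + 4 * h) - m) ^ 4 / 24) • x4 m with hV0b
  set V1a := x1 a - x1 m - (a - m) • x2 m - ((a - m) ^ 2 / 2) • x3 m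
      - ((a - m) ^ 3 / 6) • x4 m with hV1a
  set V1b := x1 (a + 4 * h) - x1 m - ((a + 4 * h) - m) • x2 m
      - (((a + 4 * h) - m) ^ 2 / 2) • x3 m - (((a + 4 * h) - m) ^ 3 / 6) • x4 m with hV1b
  have hamd : |a - m| = 2 * h := by rw [hmdef]; rw [abs_of_nonpos] <;> linarith
  have hbmd : |(a + 4 * h) - m| = 2 * h := by rw [hmdef]; rw [abs_of_nonneg] <;> linarith
  have hB0a : ‖V0a‖ ≤ 32 * M * h ^ 5 := by
    have := B0 a haS
    rw [hamd] at this
    calc ‖V0a‖ ≤ M * (2 * h) * (2 * h) * (2 * h) * (2 * h) * (2 * h) := this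
      _ = 32 * M * h ^ 5 := by ring
  have hB0b : ‖V0b‖ ≤ 32 * M * h ^ 5 := by
    have := B0 (a + 4 * h) hbS
    rw [hbmd] at this
    calc ‖V0b‖ ≤ M * (2 * h) * (2 * h) * (2 * h) * (2 * h) * (2 * h) := this
      _ = 32 * M * h ^ 5 := by ring
  have hB1a : ‖V1a‖ ≤ 16 * M * h ^ 4 := by
    have := B1 a haS
    rw [hamd] at this
    calc ‖V1a‖ ≤ M * (2 * h) * (2 * h) * (2 * h) * (2 * h) := this
      _ = 16 * M * h ^ 4 := by ring
  have hB1b : ‖V1b‖ ≤ 16 * M * h ^ 4 := by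
    have := B1 (a + 4 * h) hbS
    rw [hbmd] at this
    calc ‖V1b‖ ≤ M * (2 * h) * (2 * h) * (2 * h) * (2 * h) := this
      _ = 16 * M * h ^ 4 := by ring
  -- the key algebraic identity
  have key : w₂ - x1 m = (3 / (8 * h)) • (V0b - V0a) - (1 / 4 : ℝ) • (V1a + V1b) := by
    rw [hw, hV0a, hV0b, hV1a, hV1b, hmdef]
    have hne : h ≠ 0 := ne_of_gt hhpos
    match_scalars <;> field_simp <;> ring
  -- bound on the error
  have hE : ‖w₂ - x1 m‖ ≤ 32 * M * h ^ 4 := by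
    rw [key]
    have h1 : ‖(3 / (8 * h)) • (V0b - V0a)‖ ≤ 24 * M * h ^ 4 := by
      rw [norm_smul, Real.norm_eq_abs, abs_of_nonneg (by positivity)]
      have : ‖V0b - V0a‖ ≤ 64 * M * h ^ 5 := by
        calc ‖V0b - V0a‖ ≤ ‖V0b‖ + ‖V0a‖ := norm_sub_le _ _
          _ ≤ 32 * M * h ^ 5 + 32 * M * h ^ 5 := add_le_add hB0b hB0a
          _ = 64 * M * h ^ 5 := by ring
      calc 3 / (8 * h) * ‖V0b - V0a‖ ≤ 3 / (8 * h) * (64 * M * h ^ 5) := by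
            exact mul_le_mul_of_nonneg_left this (by positivity)
        _ = 24 * M * h ^ 4 := by field_simp; ring
    have h2 : ‖(1 / 4 : ℝ) • (V1a + V1b)‖ ≤ 8 * M * h ^ 4 := by
      rw [norm_smul, Real.norm_eq_abs]
      have : ‖V1a + V1b‖ ≤ 32 * M * h ^ 4 := by
        calc ‖V1a + V1b‖ ≤ ‖V1a‖ + ‖V1b‖ := norm_add_le _ _
          _ ≤ 16 * M * h ^ 4 + 16 * M * h ^ 4 := add_le_add hB1a hB1b
          _ = 32 * M * h ^ 4 := by ring
      calc |((1:ℝ) / 4)| * ‖V1a + V1b‖ ≤ (1 / 4) * (32 * M * h ^ 4) := by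
            rw [abs_of_nonneg (by norm_num)]
            exact mul_le_mul_of_nonneg_left this (by norm_num)
        _ = 8 * M * h ^ 4 := by ring
    calc ‖(3 / (8 * h)) • (V0b - V0a) - (1 / 4 : ℝ) • (V1a + V1b)‖
        ≤ ‖(3 / (8 * h)) • (V0b - V0a)‖ + ‖(1 / 4 : ℝ) • (V1a + V1b)‖ := norm_sub_le _ _
      _ ≤ 24 * M * h ^ 4 + 8 * M * h ^ 4 := add_le_add h1 h2
      _ = 32 * M * h ^ 4 := by ring
  -- smallness
  have hle : h ≤ min 1 (1 / (64 * M)) := by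
    have e : (a + 4 * h - a) / 4 = h := by ring
    rwa [e] at hh₀
  have hle1 : h ≤ 1 := hle.trans (min_le_left _ _)
  have hle2 : h ≤ 1 / (64 * M) := hle.trans (min_le_right _ _)
  have hpow : h ^ 4 ≤ h := by
    nlinarith [mul_nonneg (sub_nonneg.mpr hle1) (pow_nonneg hhpos.le 3),
      mul_nonneg (sub_nonneg.mpr hle1) (pow_nonneg hhpos.le 2),
      mul_nonneg (sub_nonneg.mpr hle1) hhpos.le]
  have hEhalf : 32 * M * h ^ 4 ≤ 1 / 2 := by
    have h1 : 32 * M * h ^ 4 ≤ 32 * M * h := by nlinarith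
    have h2 : 32 * M * h ≤ 32 * M * (1 / (64 * M)) :=
      mul_le_mul_of_nonneg_left hle2 (by positivity)
    have h3 : 32 * M * (1 / (64 * M)) = 1 / 2 := by field_simp; ring
    linarith
  have hnorm1 : ‖x1 m‖ = 1 := hunit m hmS
  have hwlow : (1 : ℝ) / 2 ≤ ‖w₂‖ := by
    have := norm_sub_norm_le w₂ (x1 m)
    rw [hnorm1] at this
    have h4 : ‖w₂ - x1 m‖ ≤ 1 / 2 := hE.trans hEhalf
    linarith [abs_le.mp (le_trans (abs_norm_sub_norm_le w₂ (x1 m)) h4 : |‖w₂‖ - ‖x1 m‖| ≤ 1/2)]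
  have hwne : w₂ ≠ 0 := by
    intro h0
    rw [h0, norm_zero] at hwlow
    linarith
  refine ⟨hwne, ?_⟩
  have hwn0 : ‖w₂‖ ≠ 0 := by positivity
  have hsecond : ‖w₂ - ‖w₂‖⁻¹ • w₂‖ = |‖w₂‖ - 1| := by
    have e : w₂ - ‖w₂‖⁻¹ • w₂ = (1 - ‖w₂‖⁻¹) • w₂ := by
      rw [sub_smul, one_smul]
    rw [e, norm_smul, Real.norm_eq_abs]
    rw [← abs_of_nonneg (norm_nonneg w₂), ← abs_mul]
    congr 1
    field_simp
    rw [abs_norm]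
    ring
  have habs2 : |‖w₂‖ - 1| ≤ 32 * M * h ^ 4 := by
    have := abs_norm_sub_norm_le w₂ (x1 m)
    rw [hnorm1] at this
    exact this.trans hE
  calc ‖x1 m - ‖w₂‖⁻¹ • w₂‖
      = ‖(x1 m - w₂) + (w₂ - ‖w₂‖⁻¹ • w₂)‖ := by congr 1; abel
    _ ≤ ‖x1 m - w₂‖ + ‖w₂ - ‖w₂‖⁻¹ • w₂‖ := norm_add_le _ _
    _ ≤ 32 * M * h ^ 4 + 32 * M * h ^ 4 := by
        refine add_le_add ?_ ?_
        · rw [norm_sub_rev]; exact hE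
        · rw [hsecond]; exact habs2
    _ = 64 * M * h ^ 4 := by ring
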